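/- If a differentiable function y(s) ≥ 0 satisfies y'(s) ≤ −C (r+Ks)^{−(ω−γ)/(N+ω)} y(s)^{1+1/(N+ω)} with y(0) ≤ r^{−(N+γ)}, where C ≥ K(N+γ), then y(s) ≤ (r+Ks)^{−(N+γ)} for all s ≥ 0. -/

import Mathlib

open Set

/-- ODE comparison: if `y ≥ 0` satisfies
`y' ≤ -C (r+Ks)^{-(ω-γ)/(N+ω)} y^{1+1/(N+ω)}` with `y(0) ≤ r^{-(N+γ)}` and
`C ≥ K(N+γ)`, then `y(s) ≤ (r+Ks)^{-(N+γ)}` for all `s ≥ 0`. -/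
theorem ode_comparison_barrier (N γ ω r K C : ℝ)
    (hN : 1 ≤ N) (hγ : 0 < γ) (hγω : γ < ω) (hω : ω < 1)
    (hr : 0 < r) (hK : 0 < K) (hC : 0 < C) (hCK : K * (N + γ) ≤ C)
    (y : ℝ → ℝ) (hy : Differentiable ℝ y)
    (hynn : ∀ s, 0 ≤ s → 0 ≤ y s)
    (hy0 : y 0 ≤ r ^ (-(N + γ)))
    (hode : ∀ s, 0 ≤ s →
      deriv y s ≤ -C * (r + K * s) ^ (-(ω - γ) / (N + ω)) * y s ^ (1 + 1 / (N + ω))) :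
    ∀ s, 0 ≤ s → y s ≤ (r + K * s) ^ (-(N + γ)) := by
  have hNω : (0:ℝ) < N + ω := by linarith
  have hNγ : (0:ℝ) < N + γ := by linarith
  have hbase : ∀ x : ℝ, 0 ≤ x → 0 < r + K * x := fun x hx => by positivity
  -- derivative of the barrier
  have hz' : ∀ x : ℝ, 0 ≤ x →
      HasDerivAt (fun u => (r + K * u) ^ (-(N + γ)))
        ((-(N + γ)) * (r + K * x) ^ (-(N + γ) - 1) * K) x := by
    intro x hx
    have hlin : HasDerivAt (fun u : ℝ => r + K * u) K x := by
      simpa using ((hasDerivAt_id x).const_mul K).const_add r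
    exact (Real.hasDerivAt_rpow_const (p := -(N + γ))
      (Or.inl (hbase x hx).ne')).comp x hlin
  -- key pointwise inequality at points where y x ≥ barrier
  have key : ∀ x : ℝ, 0 ≤ x → (r + K * x) ^ (-(N + γ)) ≤ y x →
      deriv y x ≤ (-(N + γ)) * (r + K * x) ^ (-(N + γ) - 1) * K := by
    intro x hx hyx
    have ha := hbase x hx
    have hq : (0:ℝ) < 1 + 1 / (N + ω) := by positivity
    have hznn : (0:ℝ) ≤ (r + K * x) ^ (-(N + γ)) := Real.rpow_nonneg ha.le _
    have hpow : ((r + K * x) ^ (-(N + γ))) ^ (1 + 1 / (N + ω)) ≤ y x ^ (1 + 1 / (N + ω)) :=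
      Real.rpow_le_rpow hznn hyx hq.le
    have hcoef : (0:ℝ) < C * (r + K * x) ^ (-(ω - γ) / (N + ω)) := by
      have := Real.rpow_pos_of_pos ha (-(ω - γ) / (N + ω))
      positivity
    have h1 : deriv y x ≤ -C * (r + K * x) ^ (-(ω - γ) / (N + ω)) *
        ((r + K * x) ^ (-(N + γ))) ^ (1 + 1 / (N + ω)) := by
      calc deriv y x ≤ -C * (r + K * x) ^ (-(ω - γ) / (N + ω)) * y x ^ (1 + 1 / (N + ω)) :=
            hode x hx
        _ ≤ _ := by nlinarith [hpow, hcoef]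
    have halg : -C * (r + K * x) ^ (-(ω - γ) / (N + ω)) *
        ((r + K * x) ^ (-(N + γ))) ^ (1 + 1 / (N + ω)) =
        -C * (r + K * x) ^ (-(N + γ) - 1) := by
      rw [← Real.rpow_mul ha.le, mul_assoc, ← Real.rpow_add ha]
      congr 2
      field_simp
      ring
    rw [halg] at h1
    have hepos : (0:ℝ) < (r + K * x) ^ (-(N + γ) - 1) :=
      Real.rpow_pos_of_pos ha _
    nlinarith [hepos]
  intro s hs
  have h1s : (0:ℝ) < 1 + s := by linarith
  refine le_of_forall_pos_le_add fun ε hε => ?_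
  set δ := ε / (1 + s) with hδdef
  have hδ : 0 < δ := div_pos hε h1s
  have main : ∀ ⦃x⦄, x ∈ Icc (0:ℝ) s →
      y x ≤ (r + K * x) ^ (-(N + γ)) + δ * (1 + x) := by
    apply image_le_of_deriv_right_lt_deriv_boundary' (f' := deriv y)
      (B := fun x => (r + K * x) ^ (-(N + γ)) + δ * (1 + x))
      (B' := fun x => (-(N + γ)) * (r + K * x) ^ (-(N + γ) - 1) * K + δ)
    · exact hy.continuous.continuousOn
    · exact fun x hx => (hy x).hasDerivAt.hasDerivWithinAt
    · have : (r + K * 0) ^ (-(N + γ)) = r ^ (-(N + γ)) := by norm_num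
      rw [this]
      nlinarith [hy0]
    · apply ContinuousOn.add
      · apply ContinuousOn.rpow_const
        · exact (continuous_const.add (continuous_const.mul continuous_id)).continuousOn
        · exact fun x hx => Or.inl (hbase x hx.1).ne'
      · exact (continuous_const.mul (continuous_const.add continuous_id)).continuousOn
    · intro x hx
      have hlin : HasDerivAt (fun u : ℝ => δ * (1 + u)) δ x := by
        simpa using ((hasDerivAt_id x).const_add (1:ℝ)).const_mul δ
      exact ((hz' x hx.1).add hlin).hasDerivWithinAt
    · intro x hx heq
      have hyge : (r + K * x) ^ (-(N + γ)) ≤ y x := by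
        rw [heq]
        nlinarith [hδ, hx.1]
      have := key x hx.1 hyge
      linarith
  have hend := main (right_mem_Icc.mpr hs)
  have : δ * (1 + s) = ε := by
    rw [hδdef, div_mul_cancel₀ ε h1s.ne']
  linarith
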